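/- Let W be a smooth vector field on a manifold S, let ρ: S → GL(n, ℝ) be smooth, and let ξ₀ be a smooth vector field on ℝⁿ. Define on ℝⁿ × S the vector field V(x, s) = (ξ_s(x), W(s)) where ξ_s(x) = (D_W ρ)(s)·ρ(s)⁻¹ x + ρ(s)·ξ₀(ρ(s)⁻¹ x) (equivalently, ξ_s(x) satisfies the paper's coupling condition). Then every integral curve γ(t) = (γ_M(t), γ_S(t)) of −V has the form γ_S an integral curve of −W, and γ_M(t) = ρ(γ_S(t)) ζ(t) for some integral curve ζ of −ξ₀. -/

import Mathlib

/-- Coupled vector field for a rotating family.  With base vector field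
`W` on `S = ℝᵏ`, a smooth family of invertible operators `ρ(s)` on `ℝⁿ` (with inverse
family `ρinv`), fiber vector field `ξ₀` on `ℝⁿ`, and coupled fiber field
`ξ_s(x) = (D_W ρ)(s) (ρ(s)⁻¹ x) + ρ(s) (ξ₀ (ρ(s)⁻¹ x))`, every integral curve
`γ = (γ_M, γ_S)` of `-V`, `V (x, s) = (ξ_{s}(x), W s)` — i.e. `γ_S` is an integral
curve of `-W` and `γ_M' = -ξ_{γ_S}(γ_M)` — has the form `γ_M(t) = ρ(γ_S(t)) ζ(t)` for
some integral curve `ζ` of `-ξ₀`. -/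

theorem stmt18 (k n : ℕ)
    (W : (Fin k → ℝ) → (Fin k → ℝ))
    (ρ ρinv : (Fin k → ℝ) → ((Fin n → ℝ) →L[ℝ] (Fin n → ℝ)))
    (hρ : Differentiable ℝ ρ)
    (hinv : ∀ s, (ρ s).comp (ρinv s) = ContinuousLinearMap.id ℝ (Fin n → ℝ) ∧
                 (ρinv s).comp (ρ s) = ContinuousLinearMap.id ℝ (Fin n → ℝ))
    (ξ₀ : (Fin n → ℝ) → (Fin n → ℝ))
    (ξ : (Fin k → ℝ) → (Fin n → ℝ) → (Fin n → ℝ))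
    (hξ : ∀ s x, ξ s x = (fderiv ℝ ρ s (W s)) (ρinv s x) + ρ s (ξ₀ (ρinv s x)))
    (γS : ℝ → Fin k → ℝ) (γM : ℝ → Fin n → ℝ)
    (hγS : ∀ t, HasDerivAt γS (-W (γS t)) t)
    (hγM : ∀ t, HasDerivAt γM (-ξ (γS t) (γM t)) t) :
    ∃ ζ : ℝ → Fin n → ℝ,
      (∀ t, HasDerivAt ζ (-ξ₀ (ζ t)) t) ∧ ∀ t, γM t = ρ (γS t) (ζ t) := by
  have h1 : ∀ s x, ρ s (ρinv s x) = x := fun s x => DFunLike.congr_fun (hinv s).1 x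
  have h2 : ∀ s x, ρinv s (ρ s x) = x := fun s x => DFunLike.congr_fun (hinv s).2 x
  let u : (Fin k → ℝ) → ((Fin n → ℝ) →L[ℝ] (Fin n → ℝ))ˣ := fun s =>
    ⟨ρ s, ρinv s, (hinv s).1, (hinv s).2⟩
  have hinv_eq : ∀ s, ρinv s = Ring.inverse (ρ s) := fun s =>
    (Ring.inverse_unit (u s)).symm
  refine ⟨fun t => ρinv (γS t) (γM t), ?_, fun t => (h1 (γS t) (γM t)).symm⟩
  intro t
  have hB : HasDerivAt (fun t => ρ (γS t)) (fderiv ℝ ρ (γS t) (-W (γS t))) t :=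
    (hρ (γS t)).hasFDerivAt.comp_hasDerivAt t (hγS t)
  have hI := (hasFDerivAt_ringInverse (u (γS t))).comp_hasDerivAt t hB
  simp only [Function.comp_def, ← hinv_eq] at hI
  have hz := hI.clm_apply (hγM t)
  convert hz using 1
  any_goals rfl
  have hval : (((u (γS t))⁻¹ : ((Fin n → ℝ) →L[ℝ] (Fin n → ℝ))ˣ) :
      (Fin n → ℝ) →L[ℝ] (Fin n → ℝ)) = ρinv (γS t) := rfl
  simp only [ContinuousLinearMap.neg_apply, ContinuousLinearMap.mulLeftRight_apply, hval,
    hξ, map_neg, map_add, ContinuousLinearMap.mul_apply, h2, h1]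
  abel
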